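/- Let ξ, η, ζ be positive integers with ξ² + η² = ζ², and set m = −ξ⁴ and n = η⁴ − ξ⁴. Then the point (ξζ(ξ+η)(ζ+η), ξηζ(ξ+η)(ζ+ξ)(ζ+η)) is a point of order 8 on the elliptic curve y² = x(x+m)(x+n). -/

import Mathlib

/-- The elliptic curve `y² = x(x + m)(x + n)` over `ℚ`. -/
def E (m n : ℤ) : WeierstrassCurve.Affine ℚ where
  a₁ := 0
  a₂ := (m : ℚ) + n
  a₃ := 0
  a₄ := (m : ℚ) * n
  a₆ := 0

open WeierstrassCurve.Affine in
private lemma some_eq_some {W : WeierstrassCurve.Affine ℚ} {x₁ y₁ x₂ y₂ : ℚ}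
    (hx : x₁ = x₂) (hy : y₁ = y₂) (h₁ : W.Nonsingular x₁ y₁) (h₂ : W.Nonsingular x₂ y₂) :
    Point.some _ _ h₁ = Point.some _ _ h₂ := by
  subst hx; subst hy; rfl

/-- If `ξ² + η² = ζ²` with `ξ, η, ζ` positive, `m = −ξ⁴` and `n = η⁴ − ξ⁴`, then the point
`(ξζ(ξ+η)(ζ+η), ξηζ(ξ+η)(ζ+ξ)(ζ+η))` has order 8 on `y² = x(x + m)(x + n)`. -/
theorem point_of_order_eight (ξ η ζ : ℕ) (hξ : 0 < ξ) (hη : 0 < η) (hζ : 0 < ζ)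
    (hpyth : ξ ^ 2 + η ^ 2 = ζ ^ 2)
    (m n : ℤ) (hm : m = -((ξ : ℤ) ^ 4)) (hn : n = (η : ℤ) ^ 4 - (ξ : ℤ) ^ 4) :
    ∃ h : (E m n).Nonsingular ((ξ : ℚ) * ζ * ((ξ : ℚ) + η) * ((ζ : ℚ) + η))
        ((ξ : ℚ) * η * ζ * ((ξ : ℚ) + η) * ((ζ : ℚ) + ξ) * ((ζ : ℚ) + η)),
      addOrderOf (WeierstrassCurve.Affine.Point.some _ _ h) = 8 := by
  open WeierstrassCurve.Affine in
  set W := E m n with hW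
  set a : ℚ := (ξ : ℚ) with hadef
  set b : ℚ := (η : ℚ) with hbdef
  set c : ℚ := (ζ : ℚ) with hcdef
  have ha : 0 < a := by rw [hadef]; exact_mod_cast hξ
  have hb : 0 < b := by rw [hbdef]; exact_mod_cast hη
  have hc0 : 0 < c := by rw [hcdef]; exact_mod_cast hζ
  have hc : c ^ 2 = a ^ 2 + b ^ 2 := by rw [hadef, hbdef, hcdef]; exact_mod_cast hpyth.symm
  have ha1 : W.a₁ = 0 := rfl
  have ha3 : W.a₃ = 0 := rfl
  have ha6 : W.a₆ = 0 := rfl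
  have ha2 : W.a₂ = b ^ 4 - 2 * a ^ 4 := by
    show ((m : ℚ) + n) = _
    rw [hm, hn]; push_cast; ring
  have ha4 : W.a₄ = a ^ 4 * (a ^ 4 - b ^ 4) := by
    show ((m : ℚ) * n) = _
    rw [hm, hn]; push_cast; ring
  set x1 : ℚ := a * c * (a + b) * (c + b) with hx1def
  set y1 : ℚ := a * b * c * (a + b) * (c + a) * (c + b) with hy1def
  have hy1pos : 0 < y1 :=
    mul_pos (mul_pos (mul_pos (mul_pos (mul_pos ha hb) hc0) (by linarith)) (by linarith))
      (by linarith)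
  -- the point is nonsingular
  have h1 : W.Nonsingular x1 y1 := by
    rw [WeierstrassCurve.Affine.nonsingular_iff]
    constructor
    · rw [WeierstrassCurve.Affine.equation_iff, ha1, ha2, ha3, ha4, ha6, hx1def, hy1def]
      linear_combination (a^2*b^4*c^4 + 2*a^2*b^5*c^3 + a^2*b^6*c^2 + a^3*b^3*c^4
        + 3*a^3*b^4*c^3 + 2*a^3*b^5*c^2 - 2*a^4*b^2*c^4 - 3*a^4*b^3*c^3 - a^4*b^4*c^2
        - 3*a^5*b*c^4 - 7*a^5*b^2*c^3 - 5*a^5*b^3*c^2 - a^5*b^4*c - a^6*c^4 - 3*a^6*b*c^3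
        - 3*a^6*b^2*c^2 - a^6*b^3*c + a^7*b*c^2 + a^7*b^2*c + a^8*c^2 + a^8*b*c) * hc
    · right
      rw [ha1, ha3]
      intro hcon
      simp only [zero_mul, sub_zero] at hcon
      linarith
  have hy1ne : y1 ≠ W.negY x1 y1 := by
    rw [WeierstrassCurve.Affine.negY, ha1, ha3]
    intro hcon
    simp only [zero_mul, sub_zero] at hcon
    linarith
  -- slope of the first doubling
  have hslope1 : W.slope x1 x1 y1 y1 = a * b + a * c + b * c := by
    rw [slope_of_Y_ne rfl hy1ne, WeierstrassCurve.Affine.negY, ha1, ha2, ha3, ha4]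
    have hden : y1 - (-y1 - 0 * x1 - 0) = 2 * y1 := by ring
    rw [hden, div_eq_iff (by linarith : (2 : ℚ) * y1 ≠ 0), hx1def, hy1def]
    linear_combination (-2*a*b^3*c^2 - 2*a*b^4*c - a^2*b^2*c^2 - 2*a^2*b^3*c + 4*a^3*b*c^2
      + 4*a^3*b^2*c + 3*a^4*c^2 + 4*a^4*b*c + a^4*b^2 - a^6) * hc
  -- coordinates of 2P
  have hX2 : W.addX x1 x1 (W.slope x1 x1 y1 y1) = a ^ 2 * c ^ 2 := by
    rw [hslope1]
    simp only [WeierstrassCurve.Affine.addX, ha1, ha2]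
    rw [hx1def]
    linear_combination (b ^ 2 - 2 * a ^ 2) * hc
  have hY2 : W.addY x1 x1 y1 (W.slope x1 x1 y1 y1) = a ^ 2 * b ^ 2 * c ^ 2 := by
    rw [hslope1]
    simp only [WeierstrassCurve.Affine.addY, WeierstrassCurve.Affine.negAddY,
      WeierstrassCurve.Affine.negY, WeierstrassCurve.Affine.addX, ha1, ha2, ha3]
    rw [hx1def, hy1def]
    linear_combination (-b^3*c - a*b^2*c - a*b^3 + 2*a^2*b*c + 2*a^3*c + 2*a^3*b) * hc
  have h2 : W.Nonsingular (a ^ 2 * c ^ 2) (a ^ 2 * b ^ 2 * c ^ 2) := by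
    rw [← hX2, ← hY2]
    exact nonsingular_add h1 h1 fun h => hy1ne h.2
  have hP2 : Point.some _ _ h1 + Point.some _ _ h1 = Point.some _ _ h2 := by
    rw [Point.add_self_of_Y_ne hy1ne]
    exact some_eq_some hX2 hY2 _ _
  -- second doubling
  have hy2pos : 0 < a ^ 2 * b ^ 2 * c ^ 2 := by positivity
  have hy2ne : a ^ 2 * b ^ 2 * c ^ 2 ≠ W.negY (a ^ 2 * c ^ 2) (a ^ 2 * b ^ 2 * c ^ 2) := by
    rw [WeierstrassCurve.Affine.negY, ha1, ha3]
    intro hcon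
    simp only [zero_mul, sub_zero] at hcon
    linarith
  have hslope2 : W.slope (a ^ 2 * c ^ 2) (a ^ 2 * c ^ 2) (a ^ 2 * b ^ 2 * c ^ 2)
      (a ^ 2 * b ^ 2 * c ^ 2) = c ^ 2 := by
    rw [slope_of_Y_ne rfl hy2ne, WeierstrassCurve.Affine.negY, ha1, ha2, ha3, ha4]
    have hden : a ^ 2 * b ^ 2 * c ^ 2 - (-(a ^ 2 * b ^ 2 * c ^ 2) - 0 * (a ^ 2 * c ^ 2) - 0)
        = 2 * (a ^ 2 * b ^ 2 * c ^ 2) := by ring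
    rw [hden, div_eq_iff (by linarith : (2 : ℚ) * (a ^ 2 * b ^ 2 * c ^ 2) ≠ 0)]
    linear_combination (-2*a^2*b^2*c^2 + 3*a^4*c^2 + a^4*b^2 - a^6) * hc
  have hX4 : W.addX (a ^ 2 * c ^ 2) (a ^ 2 * c ^ 2)
      (W.slope (a ^ 2 * c ^ 2) (a ^ 2 * c ^ 2) (a ^ 2 * b ^ 2 * c ^ 2) (a ^ 2 * b ^ 2 * c ^ 2))
      = a ^ 4 := by
    rw [hslope2]
    simp only [WeierstrassCurve.Affine.addX, ha1, ha2]
    linear_combination (c ^ 2 + b ^ 2 - a ^ 2) * hc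
  have hY4 : W.addY (a ^ 2 * c ^ 2) (a ^ 2 * c ^ 2) (a ^ 2 * b ^ 2 * c ^ 2)
      (W.slope (a ^ 2 * c ^ 2) (a ^ 2 * c ^ 2) (a ^ 2 * b ^ 2 * c ^ 2) (a ^ 2 * b ^ 2 * c ^ 2))
      = 0 := by
    rw [hslope2]
    simp only [WeierstrassCurve.Affine.addY, WeierstrassCurve.Affine.negAddY,
      WeierstrassCurve.Affine.negY, WeierstrassCurve.Affine.addX, ha1, ha2, ha3]
    linear_combination (-c^4 - b^2*c^2 + 2*a^2*c^2) * hc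
  have h4 : W.Nonsingular (a ^ 4) 0 := by
    rw [← hX4, ← hY4]
    exact nonsingular_add h2 h2 fun h => hy2ne h.2
  have hP4 : Point.some _ _ h2 + Point.some _ _ h2 = Point.some _ _ h4 := by
    rw [Point.add_self_of_Y_ne hy2ne]
    exact some_eq_some hX4 hY4 _ _
  have hP8 : Point.some _ _ h4 + Point.some _ _ h4 = 0 := by
    apply Point.add_self_of_Y_eq
    rw [WeierstrassCurve.Affine.negY, ha1, ha3]
    ring
  -- conclude
  refine ⟨h1, ?_⟩
  have e2 : (2 : ℕ) • Point.some _ _ h1 = Point.some _ _ h2 := by rw [two_nsmul, hP2]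
  have e4 : (4 : ℕ) • Point.some _ _ h1 = Point.some _ _ h4 := by
    have h42 : (4 : ℕ) • Point.some _ _ h1 = (2 : ℕ) • ((2 : ℕ) • Point.some _ _ h1) := by
      rw [smul_smul]; norm_num
    rw [h42, e2, two_nsmul, hP4]
  have e8 : (8 : ℕ) • Point.some _ _ h1 = 0 := by
    have h84 : (8 : ℕ) • Point.some _ _ h1 = (2 : ℕ) • ((4 : ℕ) • Point.some _ _ h1) := by
      rw [smul_smul]; norm_num
    rw [h84, e4, two_nsmul, hP8]
  haveI : Fact (Nat.Prime 2) := ⟨Nat.prime_two⟩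
  have hord : addOrderOf (Point.some _ _ h1) = 2 ^ (2 + 1) := by
    apply addOrderOf_eq_prime_pow
    · show ¬(2 ^ 2 : ℕ) • Point.some _ _ h1 = 0
      norm_num
      rw [e4]
      intro hcon
      rw [Point.zero_def] at hcon
      cases hcon
    · show (2 ^ (2 + 1) : ℕ) • Point.some _ _ h1 = 0
      norm_num
      exact e8
  rw [hord]; norm_num
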